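/- arXiv:2211.07544 — 3 statements merged into one kernel-verified Lean document; each statement's English description precedes it below -/
import Mathlib

section
/- Fix a Markov policy π = (μ_0,…,μ_{N−1}) and define functions V_k^π : X → [0,1] backwards in time by V_N^π(x) = 1_A(x) and V_k^π(x) = 1_A(x) · ∫_X V_{k+1}^π(y) T(dy | x, μ_k(x)) for 0 ≤ k < N. Then for every 0 ≤ k ≤ N and every x ∈ X, V_k^π(x) equals the probability P_{k,x}^π( x_j ∈ A for all k ≤ j ≤ N ) that the closed-loop trajectory started at x at time k stays in A up to time N. -/
open MeasureTheory ProbabilityTheory Set ENNReal Function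

noncomputable section

namespace StochasticSafety

variable {X U : Type*} [MeasurableSpace X] [MeasurableSpace U]

/-- A Markov policy: a sequence of (Borel-)measurable maps from states to actions. -/
structure Policy (X U : Type*) [MeasurableSpace X] [MeasurableSpace U] where
  act : ℕ → X → U
  measurable_act : ∀ k, Measurable (act k)

/-- The closed-loop kernel `κ_k^π(·|x) = T(·|x, μ_k(x))` of a policy at time `k`. -/
def Policy.kernel (T : Kernel (X × U) X) (π : Policy X U) (k : ℕ) : Kernel X X :=
  T.comap (fun x => (x, π.act k x)) (measurable_id.prodMk (π.measurable_act k))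

/-- One step of the closed-loop trajectory evolution at time `j`: given the trajectory
built so far, sample `y` from `κ` applied at coordinate `j` and record it at
coordinate `j + 1`. -/
def step (κ : Kernel X X) (j : ℕ) : Kernel (ℕ → X) (ℕ → X) :=
  Kernel.map (Kernel.id ×ₖ κ.comap (fun ω => ω j) (measurable_pi_apply j))
    (fun p => Function.update p.1 (j + 1) p.2)

/-- Kernel describing `m` steps of the trajectory evolution, starting at time `k`,
under the time-dependent kernels `κ`. -/
def evolve (κ : ℕ → Kernel X X) : ℕ → ℕ → Kernel (ℕ → X) (ℕ → X)
  | _, 0 => Kernel.id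
  | k, (m + 1) => (evolve κ (k + 1) m) ∘ₖ step (κ k) k

/-- The law `P_{k,x}^π` of the closed-loop trajectory `(x_k, …, x_N)` started at `x`
at time `k` under policy `π` (finite Ionescu–Tulcea composition of the closed-loop
kernels): the states `x_k, …, x_N` are recorded in coordinates `k, …, N` of `ℕ → X`,
all other coordinates carry the irrelevant initial value `x`. -/
def trajLaw (T : Kernel (X × U) X) (π : Policy X U) (N k : ℕ) (x : X) :
    Measure (ℕ → X) :=
  evolve (π.kernel T) k (N - k) (fun _ => x)

/-- The event that the trajectory stays in `A` at all times `j` with `k ≤ j ≤ N`. -/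
def safeEvent (A : Set X) (k N : ℕ) : Set (ℕ → X) :=
  {ω | ∀ j, k ≤ j → j ≤ N → ω j ∈ A}

/-- The event that the trajectory visits `A` at some time `j` with `k ≤ j ≤ N`. -/
def reachEvent (A : Set X) (k N : ℕ) : Set (ℕ → X) :=
  {ω | ∃ j, k ≤ j ∧ j ≤ N ∧ ω j ∈ A}


variable [StandardBorelSpace X] [TopologicalSpace U]
  [TopologicalSpace.MetrizableSpace U] [CompactSpace U] [Nonempty U] [BorelSpace U]

lemma measurableSet_safeEvent {A : Set X} (hA : MeasurableSet A) (k N : ℕ) :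
    MeasurableSet (safeEvent A k N) := by
  have : safeEvent A k N = ⋂ j, ⋂ _ : k ≤ j, ⋂ _ : j ≤ N, (fun ω : ℕ → X => ω j) ⁻¹' A := by
    ext ω; simp [safeEvent]
  rw [this]
  exact MeasurableSet.iInter fun j => MeasurableSet.iInter fun _ =>
    MeasurableSet.iInter fun _ => (measurable_pi_apply j) hA

lemma step_apply (κ : Kernel X X) [IsMarkovKernel κ] (j : ℕ) (ω : ℕ → X) :
    step κ j ω = (κ (ω j)).map (Function.update ω (j + 1)) := by
  rw [step, Kernel.map_apply _ measurable_update', Kernel.prod_apply, Kernel.id_apply,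
    Kernel.comap_apply, Measure.dirac_prod,
    Measure.map_map measurable_update' measurable_prodMk_left]
  rfl

lemma lintegral_step (κ : Kernel X X) [IsMarkovKernel κ] (j : ℕ) (ω : ℕ → X)
    {f : (ℕ → X) → ℝ≥0∞} (hf : Measurable f) :
    ∫⁻ ω', f ω' ∂(step κ j ω) = ∫⁻ y, f (Function.update ω (j + 1) y) ∂(κ (ω j)) := by
  rw [step_apply, lintegral_map hf (measurable_update _)]

lemma evolve_succ_apply (κ : ℕ → Kernel X X) [∀ k, IsMarkovKernel (κ k)] (k m : ℕ)
    (ω : ℕ → X) {S : Set (ℕ → X)} (hS : MeasurableSet S) :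
    evolve κ k (m + 1) ω S
      = ∫⁻ y, evolve κ (k + 1) m (Function.update ω (k + 1) y) S ∂(κ k (ω k)) := by
  show ((evolve κ (k + 1) m) ∘ₖ step (κ k) k) ω S = _
  rw [Kernel.comp_apply' _ _ _ hS, lintegral_step _ _ _ ((evolve κ (k + 1) m).measurable_coe hS)]

/-- The value recursion in `ℝ≥0∞`. -/
def W (κ : ℕ → Kernel X X) (A : Set X) : ℕ → ℕ → X → ℝ≥0∞
  | _, 0 => A.indicator 1
  | k, (m + 1) => fun x => A.indicator 1 x * ∫⁻ y, W κ A (k + 1) m y ∂(κ k x)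

lemma W_le_one (κ : ℕ → Kernel X X) [∀ k, IsMarkovKernel (κ k)] (A : Set X) :
    ∀ m k x, W κ A k m x ≤ 1 := by
  intro m
  induction m with
  | zero => intro k x; by_cases hx : x ∈ A <;> simp [W, hx]
  | succ m ih =>
      intro k x
      have h1 : ∫⁻ y, W κ A (k + 1) m y ∂(κ k x) ≤ 1 := by
        calc ∫⁻ y, W κ A (k + 1) m y ∂(κ k x) ≤ ∫⁻ _, 1 ∂(κ k x) :=
              lintegral_mono fun y => ih (k + 1) y
          _ = 1 := by simp
      have h2 : A.indicator (1 : X → ℝ≥0∞) x ≤ 1 := by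
        by_cases hx : x ∈ A <;> simp [hx]
      calc W κ A k (m + 1) x = A.indicator 1 x * ∫⁻ y, W κ A (k + 1) m y ∂(κ k x) := rfl
        _ ≤ 1 * 1 := mul_le_mul' h2 h1
        _ = 1 := one_mul 1

lemma W_measurable (κ : ℕ → Kernel X X) [∀ k, IsMarkovKernel (κ k)] {A : Set X}
    (hA : MeasurableSet A) : ∀ m k, Measurable (W κ A k m) := by
  intro m
  induction m with
  | zero => intro k; exact measurable_one.indicator hA
  | succ m ih =>
      intro k
      exact (measurable_one.indicator hA).mul
        (Measurable.lintegral_kernel (κ := κ k) (ih (k + 1)))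

lemma evolve_coord_ne (κ : ℕ → Kernel X X) [∀ k, IsMarkovKernel (κ k)] :
    ∀ m k j (ω : ℕ → X), j ≤ k → evolve κ k m ω {ω' | ω' j ≠ ω j} = 0 := by
  intro m
  induction m with
  | zero =>
      intro k j ω hj
      have hs : MeasurableSet {ω' : ℕ → X | ω' j ≠ ω j} := by
        have : {ω' : ℕ → X | ω' j ≠ ω j} = ((fun ω' : ℕ → X => ω' j) ⁻¹' {ω j})ᶜ := by
          ext ω'; simp
        rw [this]; exact ((measurable_pi_apply j) (measurableSet_singleton (ω j))).compl
      show (Kernel.id : Kernel (ℕ → X) (ℕ → X)) ω _ = 0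
      rw [Kernel.id_apply, Measure.dirac_apply' _ hs]
      simp
  | succ m ih =>
      intro k j ω hj
      have hs : MeasurableSet {ω' : ℕ → X | ω' j ≠ ω j} := by
        have : {ω' : ℕ → X | ω' j ≠ ω j} = ((fun ω' : ℕ → X => ω' j) ⁻¹' {ω j})ᶜ := by
          ext ω'; simp
        rw [this]; exact ((measurable_pi_apply j) (measurableSet_singleton (ω j))).compl
      rw [evolve_succ_apply κ k m ω hs]
      have : ∀ y : X, evolve κ (k + 1) m (Function.update ω (k + 1) y) {ω' | ω' j ≠ ω j} = 0 := by
        intro y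
        have hup : Function.update ω (k + 1) y j = ω j :=
          Function.update_of_ne (by omega) _ _
        have := ih (k + 1) j (Function.update ω (k + 1) y) (by omega)
        rwa [hup] at this
      simp [this]

lemma evolve_safe (κ : ℕ → Kernel X X) [∀ k, IsMarkovKernel (κ k)] {A : Set X}
    (hA : MeasurableSet A) :
    ∀ m k (ω : ℕ → X), evolve κ k m ω (safeEvent A k (k + m)) = W κ A k m (ω k) := by
  intro m
  induction m with
  | zero =>
      intro k ω
      have hse : safeEvent A k (k + 0) = (fun ω' : ℕ → X => ω' k) ⁻¹' A := by
        ext ω'; constructor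
        · intro h; exact h k le_rfl (by omega)
        · intro h j hj1 hj2; have : j = k := by omega
          subst this; exact h
      show (Kernel.id : Kernel (ℕ → X) (ℕ → X)) ω _ = _
      rw [hse, Kernel.id_apply, Measure.dirac_apply' _ ((measurable_pi_apply k) hA)]
      by_cases hx : ω k ∈ A <;> simp [W, hx]
  | succ m ih =>
      intro k ω
      have hS : MeasurableSet (safeEvent A k (k + (m + 1))) := measurableSet_safeEvent hA _ _
      rw [evolve_succ_apply κ k m ω hS]
      -- split the safe event
      have hsplit : safeEvent A k (k + (m + 1))
          = ((fun ω' : ℕ → X => ω' k) ⁻¹' A) ∩ safeEvent A (k + 1) ((k + 1) + m) := by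
        ext ω'; constructor
        · intro h; exact ⟨h k le_rfl (by omega), fun j hj1 hj2 => h j (by omega) (by omega)⟩
        · rintro ⟨h1, h2⟩ j hj1 hj2
          rcases Nat.eq_or_lt_of_le hj1 with h | h
          · subst h; exact h1
          · exact h2 j (by omega) (by omega)
      have hkey : ∀ y : X,
          evolve κ (k + 1) m (Function.update ω (k + 1) y) (safeEvent A k (k + (m + 1)))
            = A.indicator 1 (ω k) * W κ A (k + 1) m y := by
        intro y
        set η := Function.update ω (k + 1) y with hη
        have hηk : η k = ω k := Function.update_of_ne (by omega) _ _
        have hηk1 : η (k + 1) = y := Function.update_self _ _ _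
        have hT : MeasurableSet ((fun ω' : ℕ → X => ω' k) ⁻¹' A) := (measurable_pi_apply k) hA
        have hS' : MeasurableSet (safeEvent A (k + 1) ((k + 1) + m)) :=
          measurableSet_safeEvent hA _ _
        have hnull : evolve κ (k + 1) m η {ω' | ω' k ≠ η k} = 0 :=
          evolve_coord_ne κ m (k + 1) k η (by omega)
        by_cases hx : ω k ∈ A
        · -- full measure of {ω' k ∈ A}
          have h1 : evolve κ (k + 1) m η
              (safeEvent A (k + 1) ((k + 1) + m) \ ((fun ω' : ℕ → X => ω' k) ⁻¹' A)) = 0 := by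
            refine measure_mono_null ?_ hnull
            intro ω' hω'
            simp only [mem_diff, mem_preimage] at hω'
            intro h
            exact hω'.2 (by rw [h, hηk]; exact hx)
          have h2 := measure_inter_add_diff (μ := evolve κ (k + 1) m η)
            (safeEvent A (k + 1) ((k + 1) + m)) hT
          rw [hsplit, Set.inter_comm]
          have : evolve κ (k + 1) m η
              (safeEvent A (k + 1) ((k + 1) + m) ∩ (fun ω' : ℕ → X => ω' k) ⁻¹' A)
              = evolve κ (k + 1) m η (safeEvent A (k + 1) ((k + 1) + m)) := by
            rw [← h2, h1, add_zero]
          rw [this, ih (k + 1) η, hηk1]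
          simp [hx]
        · -- null
          rw [hsplit]
          have : evolve κ (k + 1) m η
              (((fun ω' : ℕ → X => ω' k) ⁻¹' A) ∩ safeEvent A (k + 1) ((k + 1) + m)) = 0 := by
            refine measure_mono_null ?_ hnull
            intro ω' hω'
            simp only [mem_preimage, mem_inter_iff] at hω'
            intro h
            apply hx
            rw [← hηk, ← h]
            exact hω'.1
          rw [this]
          simp [hx]
      simp_rw [hkey]
      rw [lintegral_const_mul _ (W_measurable κ hA m (k + 1))]
      rfl

/-- the backward recursion `V_N^π = 1_A`,
`V_k^π(x) = 1_A(x) ∫ V_{k+1}^π(y) T(dy | x, μ_k(x))` computes, at every `0 ≤ k ≤ N`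
and every state `x`, the probability that the closed-loop trajectory started at `x`
at time `k` stays in `A` up to time `N`. -/
theorem policy_value_eq_safety_probability
    (T : Kernel (X × U) X) [IsMarkovKernel T]
    (N : ℕ) (A : Set X) (hA : MeasurableSet A)
    (π : Policy X U) (V : ℕ → X → ℝ)
    (hVN : ∀ x, V N x = A.indicator 1 x)
    (hV : ∀ k < N, ∀ x,
      V k x = A.indicator (fun x' => ∫ y, V (k + 1) y ∂(π.kernel T k x')) x) :
    ∀ k ≤ N, ∀ x, V k x = (trajLaw T π N k x (safeEvent A k N)).toReal := by
  haveI : ∀ k, IsMarkovKernel (π.kernel T k) := fun k => by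
    unfold Policy.kernel; infer_instance
  intro k hk x
  have hVW : ∀ m, ∀ k, k + m = N → ∀ x, V k x = (W (π.kernel T) A k m x).toReal := by
    intro m
    induction m with
    | zero =>
        intro k hkN x
        have hkN' : k = N := by omega
        subst hkN'
        rw [hVN x]
        by_cases hx : x ∈ A <;> simp [W, hx]
    | succ m ih =>
        intro k hkN x
        have hkN' : k < N := by omega
        rw [hV k hkN' x]
        by_cases hx : x ∈ A
        · rw [Set.indicator_of_mem hx]
          have heq : ∀ y, V (k + 1) y = (W (π.kernel T) A (k + 1) m y).toReal :=
            ih (k + 1) (by omega)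
          simp_rw [heq]
          rw [integral_toReal ((W_measurable _ hA m (k + 1)).aemeasurable)
            (Filter.Eventually.of_forall fun y =>
              lt_of_le_of_lt (W_le_one _ A m (k + 1) y) one_lt_top)]
          congr 1
          simp [W, hx]
        · rw [Set.indicator_of_notMem hx]
          simp [W, hx]
  rw [hVW (N - k) k (by omega) x]
  have hN : safeEvent A k N = safeEvent A k (k + (N - k)) := by
    rw [Nat.add_sub_cancel' hk]
  rw [trajLaw, hN, evolve_safe (π.kernel T) hA (N - k) k (fun _ => x)]


end StochasticSafety
end
end

section
/- (Lemma 3, maximum invariance.) Let V_0,…,V_N : X → ℝ be bounded Borel-measurable functions that are feasible for the maximum-invariance linear program, i.e. V_N(x) = 1 for all x ∈ A, and for all 0 ≤ k < N, all x ∈ A and all u ∈ U, V_k(x) ≥ ∫_A V_{k+1}(y) T(dy|x,u). Then V_k(x) ≥ W_k(x) for every 0 ≤ k ≤ N and every x ∈ A; in other words, there is no feasible solution of the LP that lies strictly below the DP solution at any point of A. -/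
open MeasureTheory ProbabilityTheory Set

noncomputable section

namespace StochasticSafety

variable {X U : Type*} [MeasurableSpace X] [MeasurableSpace U]

variable [StandardBorelSpace X] [TopologicalSpace U]
  [TopologicalSpace.MetrizableSpace U] [CompactSpace U] [Nonempty U] [BorelSpace U]

/-- Lemma 3, maximum invariance: any bounded measurable family
`V_0, …, V_N` feasible for the maximum-invariance LP (`V_N = 1` on `A` and
`V_k(x) ≥ ∫_A V_{k+1}(y) T(dy|x,u)` on `A` for every input) dominates the maximal DP
value functions on `A`. -/
theorem lp_feasible_ge_max_dp_value
    (T : Kernel (X × U) X) [IsMarkovKernel T]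
    (N : ℕ) (A : Set X) (hA : MeasurableSet A)
    (W : ℕ → X → ℝ) (hWmeas : ∀ k, Measurable (W k))
    (hWN : ∀ x, W N x = A.indicator 1 x)
    (hW : ∀ k < N, ∀ x,
      W k x = ⨆ u : U, A.indicator (fun x' => ∫ y, W (k + 1) y ∂(T (x', u))) x)
    (V : ℕ → X → ℝ) (hVmeas : ∀ k, Measurable (V k))
    (hVbdd : ∀ k, ∃ C, ∀ x, |V k x| ≤ C)
    (hVN : ∀ x ∈ A, V N x = 1)
    (hfeas : ∀ k < N, ∀ x ∈ A, ∀ u : U,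
      ∫ y in A, V (k + 1) y ∂(T (x, u)) ≤ V k x) :
    ∀ k ≤ N, ∀ x ∈ A, W k x ≤ V k x := by
  have hint : ∀ (f : X → ℝ) (C : ℝ), Measurable f → (∀ y, |f y| ≤ C) →
      ∀ (μ : Measure X), IsProbabilityMeasure μ → Integrable f μ := by
    intro f C hf hC μ hμ
    exact ⟨hf.aestronglyMeasurable,
      HasFiniteIntegral.of_bounded (C := C)
        (Filter.Eventually.of_forall (fun y => by simpa using hC y))⟩
  have main : ∀ m k, k + m = N →
      (∀ x, 0 ≤ W k x ∧ W k x ≤ 1) ∧ (∀ x ∉ A, W k x = 0) ∧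
        (∀ x ∈ A, W k x ≤ V k x) := by
    intro m
    induction m with
    | zero =>
      intro k hk
      obtain rfl : k = N := by omega
      refine ⟨?_, ?_, ?_⟩
      · intro x; rw [hWN]; by_cases hx : x ∈ A <;> simp [Set.indicator, hx]
      · intro x hx; rw [hWN]; simp [Set.indicator_of_notMem hx]
      · intro x hx; rw [hWN, hVN x hx, Set.indicator_of_mem hx]; simp
    | succ m ih =>
      intro k hk
      have hkN : k < N := by omega
      obtain ⟨h1, h0, hle⟩ := ih (k + 1) (by omega)
      have hintW : ∀ x u, Integrable (W (k + 1)) (T (x, u)) := fun x u =>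
        hint _ 1 (hWmeas _) (fun y => abs_le.mpr ⟨by linarith [(h1 y).1], (h1 y).2⟩)
          _ inferInstance
      have hIcc : ∀ x (u : U), 0 ≤ (∫ y, W (k + 1) y ∂(T (x, u))) ∧
          (∫ y, W (k + 1) y ∂(T (x, u))) ≤ 1 := by
        intro x u
        refine ⟨integral_nonneg fun y => (h1 y).1, ?_⟩
        calc (∫ y, W (k + 1) y ∂(T (x, u))) ≤ ∫ _, (1 : ℝ) ∂(T (x, u)) :=
              integral_mono (hintW x u) (integrable_const 1) (fun y => (h1 y).2)
          _ = 1 := by simp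
      have hWk := hW k hkN
      have hbdd : ∀ x, BddAbove (Set.range fun u : U =>
          A.indicator (fun x' => ∫ y, W (k + 1) y ∂(T (x', u))) x) := by
        intro x
        refine ⟨1, ?_⟩
        rintro _ ⟨u, rfl⟩
        by_cases hx : x ∈ A
        · simpa [Set.indicator_of_mem hx] using (hIcc x u).2
        · simp [Set.indicator_of_notMem hx]
      refine ⟨?_, ?_, ?_⟩
      · intro x
        constructor
        · rw [hWk x]
          obtain ⟨u⟩ := ‹Nonempty U›
          refine le_trans ?_ (le_ciSup (hbdd x) u)
          by_cases hx : x ∈ A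
          · simp only [Set.indicator_of_mem hx]; exact (hIcc x u).1
          · simp [Set.indicator_of_notMem hx]
        · rw [hWk x]
          apply ciSup_le; intro u
          by_cases hx : x ∈ A
          · simpa [Set.indicator_of_mem hx] using (hIcc x u).2
          · simp [Set.indicator_of_notMem hx]
      · intro x hx
        rw [hWk x]
        simp [Set.indicator_of_notMem hx]
      · intro x hx
        rw [hWk x]
        apply ciSup_le; intro u
        rw [Set.indicator_of_mem hx]
        have heq : (∫ y, W (k + 1) y ∂(T (x, u))) = ∫ y in A, W (k + 1) y ∂(T (x, u)) :=
          (setIntegral_eq_integral_of_forall_compl_eq_zero (fun y hy => h0 y hy)).symm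
        obtain ⟨C, hC⟩ := hVbdd (k + 1)
        have hmono : (∫ y in A, W (k + 1) y ∂(T (x, u))) ≤ ∫ y in A, V (k + 1) y ∂(T (x, u)) :=
          setIntegral_mono_on (hintW x u).integrableOn
            (hint _ C (hVmeas _) hC _ inferInstance).integrableOn hA (fun y hy => hle y hy)
        calc (∫ y, W (k + 1) y ∂(T (x, u)))
            ≤ ∫ y in A, V (k + 1) y ∂(T (x, u)) := heq ▸ hmono
          _ ≤ V k x := hfeas k hkN x hx u
  intro k hk x hx
  exact (main (N - k) k (by omega)).2.2 x hx

end StochasticSafety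
end
end

section
/- (Lemma 3, minimum invariance analogue.) Let V_0,…,V_N : X → ℝ be bounded Borel-measurable functions that are feasible for the minimum-invariance linear program, i.e. V_N(x) = 1 for all x ∈ A, and for all 0 ≤ k < N, all x ∈ A and all u ∈ U, V_k(x) ≤ ∫_A V_{k+1}(y) T(dy|x,u). Then V_k(x) ≤ W_k^min(x) for every 0 ≤ k ≤ N and every x ∈ A; in other words, there is no feasible solution of the LP that lies strictly above the DP solution at any point of A. -/
open MeasureTheory ProbabilityTheory Set

noncomputable section

namespace StochasticSafety

variable {X U : Type*} [MeasurableSpace X] [MeasurableSpace U]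

variable [StandardBorelSpace X] [TopologicalSpace U]
  [TopologicalSpace.MetrizableSpace U] [CompactSpace U] [Nonempty U] [BorelSpace U]

/-- Lemma 3, minimum invariance analogue: any bounded measurable family
`V_0, …, V_N` feasible for the minimum-invariance LP (`V_N = 1` on `A` and
`V_k(x) ≤ ∫_A V_{k+1}(y) T(dy|x,u)` on `A` for every input) is dominated by the
minimal DP value functions on `A`. -/
theorem lp_feasible_le_min_dp_value
    (T : Kernel (X × U) X) [IsMarkovKernel T]
    (N : ℕ) (A : Set X) (hA : MeasurableSet A)
    (Wmin : ℕ → X → ℝ) (hWmeas : ∀ k, Measurable (Wmin k))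
    (hWN : ∀ x, Wmin N x = A.indicator 1 x)
    (hW : ∀ k < N, ∀ x,
      Wmin k x = ⨅ u : U, A.indicator (fun x' => ∫ y, Wmin (k + 1) y ∂(T (x', u))) x)
    (V : ℕ → X → ℝ) (hVmeas : ∀ k, Measurable (V k))
    (hVbdd : ∀ k, ∃ C, ∀ x, |V k x| ≤ C)
    (hVN : ∀ x ∈ A, V N x = 1)
    (hfeas : ∀ k < N, ∀ x ∈ A, ∀ u : U,
      V k x ≤ ∫ y in A, V (k + 1) y ∂(T (x, u))) :
    ∀ k ≤ N, ∀ x ∈ A, V k x ≤ Wmin k x := by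

  -- Main induction on the number of remaining steps `m = N - k`.
  have key : ∀ m k, k + m = N →
      (∀ x, 0 ≤ Wmin k x ∧ Wmin k x ≤ 1) ∧ (∀ x ∈ A, V k x ≤ Wmin k x) := by
    intro m
    induction m with
    | zero =>
      intro k hk
      obtain rfl : k = N := hk
      constructor
      · intro x
        rw [hWN x]
        by_cases hx : x ∈ A
        · rw [Set.indicator_of_mem hx]; norm_num
        · rw [Set.indicator_of_notMem hx]; norm_num
      · intro x hx
        rw [hWN x, Set.indicator_of_mem hx, hVN x hx]; rfl
    | succ m ih =>
      intro k hk
      have hkN : k < N := by omega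
      obtain ⟨ihb, ihV⟩ := ih (k + 1) (by omega)
      -- integrability of `Wmin (k+1)` w.r.t. any probability measure
      have hint : ∀ (μ : Measure X) [IsProbabilityMeasure μ],
          Integrable (Wmin (k + 1)) μ := by
        intro μ _
        refine ⟨(hWmeas (k + 1)).aestronglyMeasurable, ?_⟩
        refine (hasFiniteIntegral_const (1 : ℝ)).mono ?_
        refine ae_of_all _ fun y => ?_
        have := ihb y
        rw [Real.norm_eq_abs, norm_one, abs_le]
        exact ⟨by linarith [this.1], this.2⟩
      -- bounds on the indicator terms
      have hf0 : ∀ x (u : U),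
          0 ≤ A.indicator (fun x' => ∫ y, Wmin (k + 1) y ∂(T (x', u))) x := by
        intro x u
        exact Set.indicator_nonneg
          (fun x' _ => integral_nonneg fun y => (ihb y).1) x
      have hf1 : ∀ x (u : U),
          A.indicator (fun x' => ∫ y, Wmin (k + 1) y ∂(T (x', u))) x ≤ 1 := by
        intro x u
        by_cases hx : x ∈ A
        · rw [Set.indicator_of_mem hx]
          calc ∫ y, Wmin (k + 1) y ∂(T (x, u))
              ≤ ∫ _, (1 : ℝ) ∂(T (x, u)) :=
                integral_mono (hint _) (integrable_const 1) fun y => (ihb y).2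
            _ = 1 := by simp
        · rw [Set.indicator_of_notMem hx]; norm_num
      have hbdd : ∀ x, BddBelow (Set.range fun u : U =>
          A.indicator (fun x' => ∫ y, Wmin (k + 1) y ∂(T (x', u))) x) := by
        intro x
        exact ⟨0, by rintro _ ⟨u, rfl⟩; exact hf0 x u⟩
      constructor
      · intro x
        rw [hW k hkN x]
        refine ⟨le_ciInf fun u => hf0 x u, ?_⟩
        obtain ⟨u₀⟩ := ‹Nonempty U›
        exact (ciInf_le (hbdd x) u₀).trans (hf1 x u₀)
      · intro x hx
        rw [hW k hkN x]
        refine le_ciInf fun u => ?_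
        rw [Set.indicator_of_mem hx]
        have hPM : IsProbabilityMeasure (T (x, u)) := inferInstance
        obtain ⟨C, hC⟩ := hVbdd (k + 1)
        have hVint : IntegrableOn (V (k + 1)) A (T (x, u)) := by
          refine Integrable.integrableOn ?_
          refine ⟨(hVmeas (k + 1)).aestronglyMeasurable, ?_⟩
          refine (hasFiniteIntegral_const C).mono ?_
          refine ae_of_all _ fun y => ?_
          rw [Real.norm_eq_abs]
          exact (hC y).trans (le_abs_self C)
        have hWint : Integrable (Wmin (k + 1)) (T (x, u)) := hint _
        calc V k x ≤ ∫ y in A, V (k + 1) y ∂(T (x, u)) := hfeas k hkN x hx u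
          _ ≤ ∫ y in A, Wmin (k + 1) y ∂(T (x, u)) :=
              setIntegral_mono_on hVint hWint.integrableOn hA
                fun y hy => ihV y hy
          _ ≤ ∫ y, Wmin (k + 1) y ∂(T (x, u)) :=
              setIntegral_le_integral hWint (ae_of_all _ fun y => (ihb y).1)
  intro k hk x hx
  exact (key (N - k) k (by omega)).2 x hx

end StochasticSafety
end
end
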